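/- Let τ > 0, ρ ∈ (0, 1], and let c : ℝ → ℝ be measurable with ∫ c² dγ_τ < ∞. Define h(t) = ∫ max(0, t−u)·c(u) dγ_τ(u) and φ_ρ(t) = ∫ max(0, ρt + √(1−ρ²)·z) dγ(z). Then for every t ∈ ℝ: ∫ h(ρt + √(1−ρ²)·z) dγ(z) = ∫ φ_ρ(t−u)·c(ρu) dγ_{τ/ρ}(u), and ∫ c(ρu)² dγ_{τ/ρ}(u) = ∫ c(u)² dγ_τ(u). -/
import Mathlib


open MeasureTheory ProbabilityTheory

/-- The centered Gaussian measure `N(0, σ²)` on `ℝ`. -/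
noncomputable def gaussMeasure (σ : ℝ) : Measure ℝ :=
  gaussianReal 0 (Real.toNNReal (σ ^ 2))

/-- The `ρ`-smoothed ReLU `φ_ρ = U_ρ φ`. -/
noncomputable def smoothedRelu (ρ : ℝ) (t : ℝ) : ℝ :=
  ∫ u, max 0 (ρ * t + Real.sqrt (1 - ρ ^ 2) * u) ∂(gaussMeasure 1)

instance gaussMeasure_isProbabilityMeasure (σ : ℝ) :
    IsProbabilityMeasure (gaussMeasure σ) := by
  unfold gaussMeasure; infer_instance

lemma gaussMeasure_map_mul {τ ρ : ℝ} (hτ : 0 < τ) (hρ : 0 < ρ) :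
    Measure.map (fun x => ρ * x) (gaussMeasure (τ / ρ)) = gaussMeasure τ := by
  unfold gaussMeasure
  rw [show (fun x => ρ * x) = (ρ * ·) from rfl, gaussianReal_map_const_mul]
  congr 1
  · ring
  · ext
    rw [NNReal.coe_mul, Real.coe_toNNReal _ (sq_nonneg _), Real.coe_toNNReal _ (sq_nonneg _)]
    simp only [NNReal.coe_mk]
    field_simp

lemma integrable_one_add_abs_sq {σ : ℝ} (hσ : 0 < σ) :
    Integrable (fun u : ℝ => (1 + |u|) ^ 2) (gaussMeasure σ) := by
  have hv : Real.toNNReal (σ ^ 2) ≠ 0 :=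
    ne_of_gt (Real.toNNReal_pos.mpr (by positivity))
  have hvpos : (0 : ℝ) < (Real.toNNReal (σ ^ 2) : ℝ) := by
    rw [Real.coe_toNNReal _ (sq_nonneg _)]; positivity
  rw [gaussMeasure, gaussianReal_of_var_ne_zero _ hv,
    integrable_withDensity_iff (measurable_gaussianPDF _ _)
      (ae_of_all _ fun x => ENNReal.ofReal_lt_top)]
  simp only [gaussianPDF, ENNReal.toReal_ofReal (gaussianPDFReal_nonneg _ _ _)]
  set v : ℝ := (Real.toNNReal (σ ^ 2) : ℝ) with hvdef
  have hb : (0 : ℝ) < (2 * v)⁻¹ := by positivity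
  have h1 : Integrable (fun x : ℝ => Real.exp (-(2 * v)⁻¹ * x ^ 2)) :=
    integrable_exp_neg_mul_sq hb
  have h2 : Integrable (fun x : ℝ => |x| * Real.exp (-(2 * v)⁻¹ * x ^ 2)) := by
    have := (integrable_mul_exp_neg_mul_sq hb).abs
    refine this.congr (ae_of_all _ fun x => ?_)
    simp only [abs_mul, abs_of_pos (Real.exp_pos _)]
  have h3 : Integrable (fun x : ℝ => x ^ 2 * Real.exp (-(2 * v)⁻¹ * x ^ 2)) := by
    have := integrable_rpow_mul_exp_neg_mul_sq hb (s := 2) (by norm_num)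
    simpa [Real.rpow_two] using this
  have h4 : Integrable (fun x : ℝ =>
      (1 + |x|) ^ 2 * Real.exp (-(2 * v)⁻¹ * x ^ 2)) := by
    have := (h1.add (h2.const_mul 2)).add h3
    refine this.congr (ae_of_all _ fun x => ?_)
    simp only [Pi.add_apply]
    rw [← sq_abs x]
    ring
  have h5 := h4.const_mul (Real.sqrt (2 * Real.pi * v))⁻¹
  refine h5.congr (ae_of_all _ fun x => ?_)
  simp only [gaussianPDFReal, ← hvdef, sub_zero]
  rw [show -x ^ 2 / (2 * v) = -(2 * v)⁻¹ * x ^ 2 by ring]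
  ring

lemma integrable_abs_gauss {σ : ℝ} (hσ : 0 < σ) :
    Integrable (fun u : ℝ => |u|) (gaussMeasure σ) := by
  refine (integrable_one_add_abs_sq hσ).mono'
    (measurable_abs.aestronglyMeasurable) (ae_of_all _ fun x => ?_)
  rw [Real.norm_eq_abs, abs_abs]
  nlinarith [abs_nonneg x, sq_nonneg (|x|)]

/-- core computation in Proposition F.2: smoothing a ReLU random-feature
expansion `h(t) = ∫ φ(t−u)·c(u) dγ_τ(u)` with the Ornstein–Uhlenbeck operator `U_ρ` yields a
smoothed-ReLU feature expansion with rescaled weights of identical weighted `L²` norm. -/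
theorem smoothing_commutes_with_feature_expansion (τ ρ : ℝ) (hτ : 0 < τ)
    (hρ : ρ ∈ Set.Ioc (0 : ℝ) 1) (c : ℝ → ℝ) (hc : Measurable c)
    (hcL2 : Integrable (fun u => c u ^ 2) (gaussMeasure τ)) :
    ∀ t : ℝ,
      (∫ z, (∫ u, max 0 ((ρ * t + Real.sqrt (1 - ρ ^ 2) * z) - u) * c u ∂(gaussMeasure τ))
          ∂(gaussMeasure 1)) =
        (∫ u, smoothedRelu ρ (t - u) * c (ρ * u) ∂(gaussMeasure (τ / ρ))) ∧
      (∫ u, c (ρ * u) ^ 2 ∂(gaussMeasure (τ / ρ))) = ∫ u, c u ^ 2 ∂(gaussMeasure τ) := by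
  obtain ⟨hρ0, hρ1⟩ := hρ
  have hmap := gaussMeasure_map_mul hτ hρ0
  have haemul : AEMeasurable (fun x : ℝ => ρ * x) (gaussMeasure (τ / ρ)) :=
    (measurable_const_mul ρ).aemeasurable
  intro t
  constructor
  · set s : ℝ := Real.sqrt (1 - ρ ^ 2) with hs
    have hs0 : 0 ≤ s := Real.sqrt_nonneg _
    -- integrability of H u = (1+|u|)*|c u| wrt gaussMeasure τ
    have hH : Integrable (fun u : ℝ => (1 + |u|) * |c u|) (gaussMeasure τ) := by
      refine ((integrable_one_add_abs_sq hτ).add hcL2).mono'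
        (((measurable_const.add measurable_abs).mul hc.abs).aestronglyMeasurable)
        (ae_of_all _ fun u => ?_)
      rw [Real.norm_of_nonneg (by positivity)]
      simp only [Pi.add_apply]
      nlinarith [sq_nonneg ((1 + |u|) - |c u|), sq_abs (c u), abs_nonneg u, abs_nonneg (c u)]
    -- integrability of G z = (1+|ρ*t|) + s*|z| wrt gaussMeasure 1
    have hG : Integrable (fun z : ℝ => (1 + |ρ * t|) + s * |z|) (gaussMeasure 1) :=
      (integrable_const _).add ((integrable_abs_gauss one_pos).const_mul s)
    -- Fubini
    have hFint : Integrable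
        (Function.uncurry fun z u => max 0 (ρ * t + s * z - u) * c u)
        ((gaussMeasure 1).prod (gaussMeasure τ)) := by
      refine (hG.mul_prod hH).mono' ?_ (ae_of_all _ fun p => ?_)
      · exact ((measurable_const.max
          (((measurable_const.add (measurable_fst.const_mul s)).sub measurable_snd)))
          |>.mul (hc.comp measurable_snd)).aestronglyMeasurable
      · obtain ⟨z, u⟩ := p
        simp only [Function.uncurry_apply_pair, Real.norm_eq_abs]
        rw [abs_mul]
        have h1 : |max 0 (ρ * t + s * z - u)| ≤ (1 + |ρ * t|) + s * |z| + (1 + |ρ * t| + s * |z|) * |u| := by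
          rw [abs_of_nonneg (le_max_left _ _)]
          have : ρ * t + s * z - u ≤ |ρ * t| + s * |z| + |u| := by
            have h1 := le_abs_self (ρ * t)
            have h2 := le_abs_self (s * z)
            have h3 := neg_abs_le u
            rw [abs_mul, abs_of_nonneg hs0] at h2
            linarith
          have h0 : (0:ℝ) ≤ |ρ * t| + s * |z| + |u| := by positivity
          have hmax : max 0 (ρ * t + s * z - u) ≤ |ρ * t| + s * |z| + |u| :=
            max_le h0 this
          nlinarith [mul_nonneg (add_nonneg (abs_nonneg (ρ * t))
            (mul_nonneg hs0 (abs_nonneg z))) (abs_nonneg u)]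
        calc |max 0 (ρ * t + s * z - u)| * |c u|
            ≤ ((1 + |ρ * t|) + s * |z| + (1 + |ρ * t| + s * |z|) * |u|) * |c u| := by
              exact mul_le_mul_of_nonneg_right h1 (abs_nonneg _)
          _ = ((1 + |ρ * t|) + s * |z|) * ((1 + |u|) * |c u|) := by ring
    have hswap := MeasureTheory.integral_integral_swap hFint
    rw [hswap]
    simp_rw [MeasureTheory.integral_mul_const]
    -- change of variables
    have hinner : StronglyMeasurable fun u : ℝ => ∫ z, max 0 (ρ * t + s * z - u) ∂(gaussMeasure 1) := by
      have hcont : Continuous (Function.uncurry fun (u z : ℝ) => max 0 (ρ * t + s * z - u)) := by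
        exact continuous_const.max
          ((continuous_const.add (continuous_const.mul continuous_snd)).sub continuous_fst)
      exact hcont.stronglyMeasurable.integral_prod_right
    have hgm : AEStronglyMeasurable
        (fun u : ℝ => (∫ z, max 0 (ρ * t + s * z - u) ∂(gaussMeasure 1)) * c u)
        (Measure.map (fun x => ρ * x) (gaussMeasure (τ / ρ))) :=
      (hinner.measurable.mul hc).aestronglyMeasurable
    rw [← hmap, MeasureTheory.integral_map haemul hgm]
    refine integral_congr_ae (ae_of_all _ fun u => ?_)
    have harg : ∀ z : ℝ, ρ * t + s * z - ρ * u = ρ * (t - u) + s * z := fun z => by ring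
    simp_rw [harg]
    rfl
  · have hgm2 : AEStronglyMeasurable (fun u : ℝ => c u ^ 2)
        (Measure.map (fun x => ρ * x) (gaussMeasure (τ / ρ))) :=
      (hc.pow_const 2).aestronglyMeasurable
    rw [← hmap, MeasureTheory.integral_map haemul hgm2]
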